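/- Let n be odd and consider the game on the characteristic cycle V. Fix a position after Alice's turn where V = T_1 R_1 T_2 R_2 with T_1, T_2 arcs of taken slices, l(T_1) = l(T_2)+1, and R_1, R_2 the arcs of remaining slices with l(R_1) = l(R_2). If Bob takes the last slice of R_1 and both players thereafter make only shifts by Bob (Bob makes only shifts), then regardless of Alice's remaining turns, Bob ends up taking all of R_1 and Alice all of R_2; symmetrically if Bob takes the first slice of R_2, Bob takes all of R_2 and Alice all of R_1. -/

import Mathlib

/-- Adjacency of slices on the circular pizza with `n` slices. -/
def adj (n : ℕ) (i j : Fin n) : Prop :=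
  (i.1 + 1) % n = j.1 ∨ (j.1 + 1) % n = i.1

instance (n : ℕ) (i j : Fin n) : Decidable (adj n i j) := by
  unfold adj; infer_instance

/-- `h` lists the slices taken so far, in the order they were taken.
It is a valid (partial) play of the Polite Pizza Protocol if no slice is taken
twice and every slice except the first is adjacent to a previously taken one. -/
def ValidHist (n : ℕ) (h : List (Fin n)) : Prop :=
  h.Nodup ∧ ∀ (k : ℕ) (hk : k < h.length), 0 < k →
    ∃ (j : ℕ) (hj : j < k), adj n (h.get ⟨k, hk⟩) (h.get ⟨j, hj.trans hk⟩)

/-- `m` is a legal next slice after history `h`. -/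
def ValidMove (n : ℕ) (h : List (Fin n)) (m : Fin n) : Prop :=
  m ∉ h ∧ (h = [] ∨ ∃ x ∈ h, adj n m x)

/-- Total size of the slices taken at (0-based) turns satisfying `f`. -/
def gainOn (n : ℕ) (P : Fin n → ℝ) (f : ℕ → Bool) (l : List (Fin n)) : ℝ :=
  (((l.zipIdx.map (fun p => (p.2, p.1))).filter (fun p => f p.1)).map (fun p => P p.2)).sum

/-- Alice moves at even turns (0-based), Bob at odd turns. -/
def isAlice (k : ℕ) : Bool := k % 2 == 0
def isBob (k : ℕ) : Bool := k % 2 == 1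

def aliceGain (n : ℕ) (P : Fin n → ℝ) (l : List (Fin n)) : ℝ := gainOn n P isAlice l
def bobGain (n : ℕ) (P : Fin n → ℝ) (l : List (Fin n)) : ℝ := gainOn n P isBob l

/-- The play `l` is consistent with the strategy `s` used at the turns satisfying `f`. -/
def Consistent (n : ℕ) (f : ℕ → Bool) (s : List (Fin n) → Fin n) (l : List (Fin n)) : Prop :=
  ∀ (k : ℕ) (hk : k < l.length), f k → l.get ⟨k, hk⟩ = s (l.take k)

/-- The strategy `s`, used at turns satisfying `f`, always produces legal moves. -/
def Legal (n : ℕ) (f : ℕ → Bool) (s : List (Fin n) → Fin n) : Prop :=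
  ∀ h, ValidHist n h → h.length < n → f h.length → ValidMove n h (s h)

/-- Number of jumps made at turns satisfying `f` during the play `l`:
turn `k ≥ 1` is a jump if the slice taken is not adjacent to the one taken at turn `k-1`. -/
def jumpCount (n : ℕ) (f : ℕ → Bool) (l : List (Fin n)) : ℕ :=
  ((((l.zip l.tail).zipIdx.map (fun p => (p.2, p.1)))).filter
    (fun p => f (p.1 + 1) && !(decide (adj n p.2.2 p.2.1)))).length

/-- Alice has a strategy making at most `j` jumps and guaranteeing her
slices of total size at least `g`. -/
def AliceJGain (n : ℕ) (P : Fin n → ℝ) (j : ℕ) (g : ℝ) : Prop :=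
  ∃ s : List (Fin n) → Fin n, Legal n isAlice s ∧
    ∀ l : List (Fin n), ValidHist n l → l.length = n → Consistent n isAlice s l →
      g ≤ aliceGain n P l ∧ jumpCount n isAlice l ≤ j

/-- Alice has a strategy guaranteeing her slices of total size at least `g`. -/
def AliceGain' (n : ℕ) (P : Fin n → ℝ) (g : ℝ) : Prop :=
  ∃ s : List (Fin n) → Fin n, Legal n isAlice s ∧
    ∀ l : List (Fin n), ValidHist n l → l.length = n → Consistent n isAlice s l →
      g ≤ aliceGain n P l

/-- Bob (moving second) has a strategy guaranteeing him slices of total size at least `g`. -/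
def BobGain' (n : ℕ) (P : Fin n → ℝ) (g : ℝ) : Prop :=
  ∃ s : List (Fin n) → Fin n, Legal n isBob s ∧
    ∀ l : List (Fin n), ValidHist n l → l.length = n → Consistent n isBob s l →
      g ≤ bobGain n P l

open Fin.NatCast

section PizzaAux

variable {n : ℕ} [NeZero n]

lemma fin_add_one_val (hn : 2 ≤ n) (u : Fin n) : (u + 1).1 = (u.1 + 1) % n := by
  rw [Fin.add_def, Fin.val_one']
  rw [Nat.mod_eq_of_lt (by omega : 1 < n)]

lemma adj_succ (hn : 2 ≤ n) (u : Fin n) : adj n u (u + 1) :=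
  Or.inl (fin_add_one_val hn u).symm

lemma adj_succ' (hn : 2 ≤ n) (u : Fin n) : adj n (u + 1) u :=
  Or.inr (fin_add_one_val hn u).symm

lemma cast_succ (k : ℕ) : ((k + 1 : ℕ) : Fin n) = (k : Fin n) + 1 := by push_cast; ring

lemma off_succ (i : Fin n) (k : ℕ) : i + ((k + 1 : ℕ) : Fin n) = (i + (k : Fin n)) + 1 := by
  rw [cast_succ, add_assoc]

lemma off_inj (i : Fin n) {k k' : ℕ} (hk : k < n) (hk' : k' < n)
    (he : i + (k : Fin n) = i + (k' : Fin n)) : k = k' := by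
  have h1 : (k : Fin n) = (k' : Fin n) := add_left_cancel he
  have := congrArg Fin.val h1
  rwa [Fin.val_cast_of_lt hk, Fin.val_cast_of_lt hk'] at this

lemma validHist_take {l : List (Fin n)} (hl : ValidHist n l) (t : ℕ) :
    ValidHist n (l.take t) := by
  refine ⟨hl.1.sublist (List.take_sublist t l), ?_⟩
  intro k hk hk0
  have hkl : k < l.length := lt_of_lt_of_le hk (by simp)
  obtain ⟨j, hj, hadj⟩ := hl.2 k hkl hk0
  refine ⟨j, hj, ?_⟩
  simp only [List.get_eq_getElem, List.getElem_take] at *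
  exact hadj

lemma get_not_mem_take {l : List (Fin n)} (hnd : l.Nodup) (t : ℕ) (ht : t < l.length) :
    l.get ⟨t, ht⟩ ∉ l.take t := by
  intro hmem
  obtain ⟨⟨k, hk⟩, hget⟩ := List.get_of_mem hmem
  have hk' : k < t ∧ k < l.length := by simpa using hk
  have heq : l.get ⟨k, hk'.2⟩ = l.get ⟨t, ht⟩ := by
    rw [← hget]; simp [List.getElem_take]
  have h2 := List.nodup_iff_injective_get.mp hnd heq
  simp at h2; omega

lemma take_succ_eq {l : List (Fin n)} (t : ℕ) (ht : t < l.length) :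
    l.take (t + 1) = l.take t ++ [l.get ⟨t, ht⟩] := by
  rw [List.take_succ]
  simp [List.getElem?_eq_getElem ht]

lemma prefix_of_concat {m : Fin n} {l p : List (Fin n)} (hl : l.length ≤ p.length)
    (h : l <+: p ++ [m]) : l <+: p := by
  have h1 : l = (p ++ [m]).take l.length := List.prefix_iff_eq_take.mp h
  rw [List.take_append_of_le_length hl] at h1
  rw [h1]; exact List.take_prefix _ _

/-- The untaken offsets form the interval `[a, a+r)`. -/
def ItvAt (n j : ℕ) [NeZero n] (i : Fin n) (p : List (Fin n)) (a r : ℕ) : Prop :=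
  a + r ≤ 2 * j ∧ ∀ k, k < 2 * j → ((i + (k : Fin n)) ∉ p ↔ a ≤ k ∧ k < a + r)

end PizzaAux

section Itv

variable {n : ℕ} [NeZero n]

lemma itv_exists (h : List (Fin n)) (j : ℕ) (i : Fin n)
    (hodd : h.length % 2 = 1) (hj : 1 ≤ j) (hlen : h.length + 2 * j = n)
    (hrem : ∀ m : Fin n, m ∉ h ↔ ∃ k < 2 * j, m = i + ((k : ℕ) : Fin n)) :
    ∀ h' : List (Fin n), ValidHist n h' → h <+: h' →
      ∃ a, ItvAt n j i h' a (n - h'.length) := by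
  have hn3 : 3 ≤ n := by omega
  intro h'
  induction h' using List.reverseRecOn with
  | nil =>
    intro _ hp
    exfalso; have := hp.length_le; simp only [List.length_nil, Nat.le_zero] at this; omega
  | append_singleton p m IH =>
    intro hv hp
    have hvp : ValidHist n p := by
      have : p = (p ++ [m]).take p.length := by simp
      rw [this]; exact validHist_take hv _
    have hl' : p.length + 1 ≤ n := by
      have := hv.1.length_le_card; simpa using this
    rcases Nat.lt_or_ge p.length h.length with hc | hc
    · -- h' = h
      have hle : h.length ≤ p.length + 1 := by simpa using hp.length_le
      have heq : h = p ++ [m] := hp.eq_of_length (by simp; omega)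
      rw [← heq]
      have hr : n - h.length = 2 * j := by omega
      rw [hr]
      refine ⟨0, by omega, ?_⟩
      intro k hk
      simp only [Nat.zero_add, Nat.zero_le, true_and]
      constructor
      · intro _; exact hk
      · intro _; exact (hrem _).mpr ⟨k, hk, rfl⟩
    · -- step case
      have hpp : h <+: p := prefix_of_concat hc hp
      obtain ⟨a, hbound, hiff⟩ := IH hvp hpp
      set r := n - (p.length + 1) with hrdef
      have hrp : n - p.length = r + 1 := by omega
      rw [hrp] at hbound hiff
      have hmnp : m ∉ p := by
        intro hm
        exact (List.nodup_append'.mp hv.1).2.2 hm (by simp)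
      have hmnh : m ∉ h := fun hm => hmnp (hpp.subset hm)
      obtain ⟨k, hk2j, hmk⟩ := (hrem m).mp hmnh
      have h2jn : 2 * j < n := by omega
      have hkK : a ≤ k ∧ k < a + (r + 1) := (hiff k hk2j).mp (hmk ▸ hmnp)
      have hplen_pos : 0 < p.length := by have := hpp.length_le; omega
      obtain ⟨jx, hjx, hadj⟩ := hv.2 p.length (by simp) hplen_pos
      have hjxp : jx < p.length := hjx
      have hgm : (p ++ [m]).get ⟨p.length, by simp⟩ = m := by simp
      have hgx : (p ++ [m]).get ⟨jx, by simp; omega⟩ = p.get ⟨jx, hjxp⟩ := by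
        simp [List.getElem_append, hjxp]
      rw [hgm, hgx] at hadj
      have hxp : p.get ⟨jx, hjxp⟩ ∈ p := List.get_mem _ _
      set x := p.get ⟨jx, hjxp⟩
      -- m's offset is an endpoint
      have hend : k = a ∨ k = a + r := by
        by_contra hne
        push_neg at hne
        have hak : a < k := lt_of_le_of_ne hkK.1 (Ne.symm hne.1)
        have hkb : k + 1 < a + (r + 1) := by omega
        rcases hadj with hA | hA
        · -- x = m + 1
          have hx1 : x = m + 1 := Fin.ext (by rw [fin_add_one_val (by omega) m]; exact hA.symm)
          have hxeq : x = i + ((k + 1 : ℕ) : Fin n) := by rw [hx1, hmk, off_succ]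
          have hx_not : x ∉ p := by
            rw [hxeq]; exact (hiff (k + 1) (by omega)).mpr ⟨by omega, by omega⟩
          exact hx_not hxp
        · -- m = x + 1
          have hm1 : m = x + 1 := Fin.ext (by rw [fin_add_one_val (by omega) x]; exact hA.symm)
          have hxeq : x = i + ((k - 1 : ℕ) : Fin n) := by
            have h1 : i + ((k - 1 : ℕ) : Fin n) + 1 = m := by
              rw [← off_succ, (by omega : k - 1 + 1 = k), ← hmk]
            exact (add_right_cancel (h1.trans hm1)).symm
          have hx_not : x ∉ p := by
            rw [hxeq]; exact (hiff (k - 1) (by omega)).mpr ⟨by omega, by omega⟩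
          exact hx_not hxp
      have hmem_iff : ∀ k', k' < 2 * j →
          ((i + (k' : Fin n)) ∉ p ++ [m] ↔ ((a ≤ k' ∧ k' < a + (r + 1)) ∧ k' ≠ k)) := by
        intro k' hk'
        rw [show ((i + (k' : Fin n)) ∉ p ++ [m]) ↔ ((i + (k' : Fin n)) ∉ p ∧ (i + (k' : Fin n)) ≠ m) by
          simp [List.mem_append, not_or]]
        rw [hiff k' hk']
        constructor
        · rintro ⟨h1, h2⟩
          refine ⟨h1, fun hke => h2 ?_⟩
          rw [hmk, hke]
        · rintro ⟨h1, h2⟩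
          refine ⟨h1, fun he => h2 ?_⟩
          exact off_inj i (by omega) (by omega) (he.trans hmk)
      have hlen' : n - (p ++ [m]).length = r := by simp [hrdef]
      rw [hlen']
      rcases hend with hka | hka
      · refine ⟨a + 1, by omega, ?_⟩
        intro k' hk'
        rw [hmem_iff k' hk']
        constructor
        · rintro ⟨⟨h1, h2⟩, h3⟩; omega
        · rintro ⟨h1, h2⟩; exact ⟨⟨by omega, by omega⟩, by omega⟩
      · refine ⟨a, by omega, ?_⟩
        intro k' hk'
        rw [hmem_iff k' hk']
        constructor
        · rintro ⟨⟨h1, h2⟩, h3⟩; omega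
        · rintro ⟨h1, h2⟩; exact ⟨⟨by omega, by omega⟩, by omega⟩

end Itv

/-- Bob's shift strategy: take the endpoint of the remaining arc whose
offset has parity `par`. -/
def pstrat (n j : ℕ) [NeZero n] (i : Fin n) (par : ℕ) (h' : List (Fin n)) : Fin n :=
  let K := (Finset.range (2 * j)).filter fun k : ℕ => (i + (k : Fin n)) ∉ h'
  if hK : K.Nonempty then
    if (K.min' hK) % 2 = par then i + ((K.min' hK : ℕ) : Fin n)
    else i + ((K.max' hK : ℕ) : Fin n)
  else i

section Strat

variable {n : ℕ} [NeZero n]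

lemma pstrat_eq (j : ℕ) (i : Fin n) (par : ℕ) (h' : List (Fin n)) (a r : ℕ) (hr : 1 ≤ r)
    (hI : ItvAt n j i h' a r) :
    pstrat n j i par h' = i + (((if a % 2 = par then a else a + r - 1) : ℕ) : Fin n) := by
  obtain ⟨hb, hiff⟩ := hI
  have hK : (Finset.range (2 * j)).filter (fun k : ℕ => (i + (k : Fin n)) ∉ h')
      = Finset.Ico a (a + r) := by
    ext k
    simp only [Finset.mem_filter, Finset.mem_range, Finset.mem_Ico]
    constructor
    · rintro ⟨h1, h2⟩; exact (hiff k h1).mp h2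
    · intro hk
      have hk2 : k < 2 * j := by omega
      exact ⟨hk2, (hiff k hk2).mpr hk⟩
  have hne : (Finset.Ico a (a + r)).Nonempty := by
    rw [Finset.nonempty_Ico]; omega
  have hmin : (Finset.Ico a (a + r)).min' hne = a :=
    le_antisymm (Finset.min'_le _ _ (by simp [Finset.mem_Ico]; omega))
      (Finset.le_min' _ _ _ (fun y hy => by simp [Finset.mem_Ico] at hy; omega))
  have hmax : (Finset.Ico a (a + r)).max' hne = a + r - 1 :=
    le_antisymm (Finset.max'_le _ _ _ (fun y hy => by simp [Finset.mem_Ico] at hy; omega))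
      (Finset.le_max' _ _ (by simp [Finset.mem_Ico]; omega))
  unfold pstrat
  simp only [hK, dif_pos hne, hmin, hmax]
  split <;> rfl

lemma pstrat_legal (h : List (Fin n)) (j : ℕ) (i : Fin n) (par : ℕ)
    (hodd : h.length % 2 = 1) (hj : 1 ≤ j) (hlen : h.length + 2 * j = n)
    (hrem : ∀ m : Fin n, m ∉ h ↔ ∃ k < 2 * j, m = i + ((k : ℕ) : Fin n)) :
    ∀ h', ValidHist n h' → h'.length < n → h'.length % 2 = 1 → h <+: h' →
      ValidMove n h' (pstrat n j i par h') := by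
  intro h' hv hln hlo hp
  have hn3 : 3 ≤ n := by omega
  obtain ⟨a, hI⟩ := itv_exists h j i hodd hj hlen hrem h' hv hp
  set r := n - h'.length with hrdef
  have hr1 : 1 ≤ r := by omega
  rw [pstrat_eq j i par h' a r hr1 hI]
  obtain ⟨hb, hiff⟩ := hI
  set e := if a % 2 = par then a else a + r - 1 with hedef
  have hea : e = a ∨ e = a + r - 1 := by
    by_cases hc : a % 2 = par <;> simp [hedef, hc]
  have hee : a ≤ e ∧ e < a + r := by rcases hea with he | he <;> omega
  constructor
  · exact (hiff e (by omega)).mpr hee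
  · right
    rcases hea with he | he
    · -- e = a : look below
      by_cases ha0 : a = 0
      · refine ⟨i + ((n - 1 : ℕ) : Fin n), ?_, ?_⟩
        · refine hp.subset ?_
          by_contra hc
          obtain ⟨k, hk, hek⟩ := (hrem _).mp hc
          have := off_inj i (by omega) (by omega) hek
          omega
        · have hx1 : (i + ((n - 1 : ℕ) : Fin n)) + 1 = i + ((e : ℕ) : Fin n) := by
            rw [← off_succ, (by omega : n - 1 + 1 = n)]
            simp [he, ha0]
          rw [← hx1]
          exact adj_succ' (by omega) _
      · refine ⟨i + ((a - 1 : ℕ) : Fin n), ?_, ?_⟩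
        · by_contra hc
          have := (hiff (a - 1) (by omega)).mp hc
          omega
        · have hx1 : (i + ((a - 1 : ℕ) : Fin n)) + 1 = i + ((e : ℕ) : Fin n) := by
            rw [← off_succ, (by omega : a - 1 + 1 = a), he]
          rw [← hx1]
          exact adj_succ' (by omega) _
    · -- e = a + r - 1 : look above
      by_cases hae : a + r = 2 * j
      · refine ⟨i + ((2 * j : ℕ) : Fin n), ?_, ?_⟩
        · refine hp.subset ?_
          by_contra hc
          obtain ⟨k, hk, hek⟩ := (hrem _).mp hc
          have := off_inj i (by omega) (by omega) hek
          omega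
        · have hx1 : i + ((2 * j : ℕ) : Fin n) = (i + ((e : ℕ) : Fin n)) + 1 := by
            rw [← off_succ, (by omega : e + 1 = 2 * j)]
          rw [hx1]
          exact adj_succ (by omega) _
      · refine ⟨i + ((a + r : ℕ) : Fin n), ?_, ?_⟩
        · by_contra hc
          have := (hiff (a + r) (by omega)).mp hc
          omega
        · have hx1 : i + ((a + r : ℕ) : Fin n) = (i + ((e : ℕ) : Fin n)) + 1 := by
            rw [← off_succ, (by omega : e + 1 = a + r)]
          rw [hx1]
          exact adj_succ (by omega) _

end Strat

section Play

variable {n : ℕ} [NeZero n]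

set_option maxHeartbeats 2000000 in
lemma play_main (h : List (Fin n)) (j : ℕ) (i : Fin n) (par : ℕ) (hpar : par < 2)
    (hodd : h.length % 2 = 1) (hj : 1 ≤ j) (hlen : h.length + 2 * j = n)
    (hrem : ∀ m : Fin n, m ∉ h ↔ ∃ k < 2 * j, m = i + ((k : ℕ) : Fin n))
    (l : List (Fin n)) (hvl : ValidHist n l) (hll : l.length = n) (hpl : h <+: l)
    (hcons : ∀ (k : ℕ) (hk : k < l.length), k % 2 = 1 → h.length ≤ k →
      l.get ⟨k, hk⟩ = pstrat n j i par (l.take k)) :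
    (∀ (t : ℕ) (ht : t < l.length) (ht' : t - 1 < l.length),
      h.length < t → t % 2 = 1 → adj n (l.get ⟨t, ht⟩) (l.get ⟨t - 1, ht'⟩)) ∧
    (∀ k < 2 * j, ∀ (t : ℕ) (ht : t < l.length),
      l.get ⟨t, ht⟩ = i + ((k : ℕ) : Fin n) → (t % 2 = 1 ↔ k % 2 = par)) := by
  have hn3 : 3 ≤ n := by omega
  have hnodd : n % 2 = 1 := by omega
  have hheq : h = l.take h.length := List.prefix_iff_eq_take.mp hpl
  have hplt : ∀ t, h.length ≤ t → h <+: l.take t := by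
    intro t ht
    rw [hheq]
    have : l.take h.length = (l.take t).take h.length := by
      rw [List.take_take, Nat.min_eq_left ht]
    rw [this]
    exact List.take_prefix _ _
  -- interval data for every prefix
  have hitv : ∀ t, h.length ≤ t → t ≤ n → ∃ a, ItvAt n j i (l.take t) a (n - t) := by
    intro t h1 h2
    obtain ⟨a, hI⟩ := itv_exists h j i hodd hj hlen hrem (l.take t)
      (validHist_take hvl t) (hplt t h1)
    have hlt : (l.take t).length = t := by
      rw [List.length_take]; omega
    rw [hlt] at hI
    exact ⟨a, hI⟩
  -- each slice taken during the endgame is the current endpoint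
  have hstep : ∀ (t : ℕ) (ht0 : h.length ≤ t) (htn : t + 1 < n) (a a' : ℕ)
      (hI : ItvAt n j i (l.take t) a (n - t))
      (hI' : ItvAt n j i (l.take (t + 1)) a' (n - (t + 1))),
      ∃ k, k < 2 * j ∧ l.get ⟨t, by omega⟩ = i + ((k : ℕ) : Fin n) ∧
        ((k = a ∧ a' = a + 1) ∨ (k = a + (n - t) - 1 ∧ a' = a)) := by
    intro t ht htn a a' hI hI'
    obtain ⟨hb, hiff⟩ := hI
    obtain ⟨hb', hiff'⟩ := hI'
    have htl : t < l.length := by omega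
    have hnm : l.get ⟨t, htl⟩ ∉ l.take t := get_not_mem_take hvl.1 t htl
    have hnh : l.get ⟨t, htl⟩ ∉ h := fun hm => hnm ((hplt t ht).subset hm)
    obtain ⟨k, hk2j, hlk⟩ := (hrem _).mp hnh
    have hkin : a ≤ k ∧ k < a + (n - t) := (hiff k hk2j).mp (hlk ▸ hnm)
    have htake1 : l.take (t + 1) = l.take t ++ [l.get ⟨t, htl⟩] := take_succ_eq t htl
    have hmem1 : l.get ⟨t, htl⟩ ∈ l.take (t + 1) := by
      rw [htake1]
      exact List.mem_append_right _ (List.mem_singleton_self _)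
    have hknotin : ¬(a' ≤ k ∧ k < a' + (n - (t + 1))) := by
      intro hc
      exact ((hiff' k hk2j).mpr hc) (hlk ▸ hmem1)
    -- elements other than k stay missing
    have hsub : ∀ k', k' < 2 * j → a ≤ k' → k' < a + (n - t) → k' ≠ k →
        (a' ≤ k' ∧ k' < a' + (n - (t + 1))) := by
      intro k' h1 h2 h3 h4
      refine (hiff' k' h1).mp ?_
      rw [htake1]
      simp only [List.mem_append, List.mem_singleton, not_or]
      refine ⟨(hiff k' h1).mpr ⟨h2, h3⟩, fun he => h4 ?_⟩
      rw [hlk] at he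
      exact off_inj i (by omega) (by omega) he
    have hr2 : 2 ≤ n - t := by omega
    have hsup : ∀ k', k' < 2 * j → a' ≤ k' → k' < a' + (n - (t + 1)) →
        (a ≤ k' ∧ k' < a + (n - t)) := by
      intro k' h1 h2 h3
      by_contra hc
      have hmem : (i + (k' : Fin n)) ∈ l.take t := by
        by_contra hm
        exact hc ((hiff k' h1).mp hm)
      exact ((hiff' k' h1).mpr ⟨h2, h3⟩)
        (by rw [htake1]; exact List.mem_append_left _ hmem)
    have ha'in := hsup a' (by omega) (le_refl _) (by omega)
    refine ⟨k, hk2j, hlk, ?_⟩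
    by_cases hka : k = a
    · left
      refine ⟨hka, ?_⟩
      have h1 := hsub (a + 1) (by omega) (by omega) (by omega) (by omega)
      omega
    · right
      have h1 := hsub a (by omega) (by omega) (by omega) (fun he => hka he.symm)
      have hkb : k = a + (n - t) - 1 := by
        by_contra hkb
        have h2 := hsub (a + (n - t) - 1) (by omega) (by omega) (by omega) (by omega)
        omega
      exact ⟨hkb, by omega⟩
  -- Bob's move at odd times
  have hbob : ∀ (t : ℕ) (ht0 : h.length ≤ t) (htn : t < n) (hto : t % 2 = 1) (a : ℕ)
      (hI : ItvAt n j i (l.take t) a (n - t)),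
      ∃ e, l.get ⟨t, by omega⟩ = i + ((e : ℕ) : Fin n) ∧ e % 2 = par ∧
        e = (if a % 2 = par then a else a + (n - t) - 1) := by
    intro t ht htn hto a hI
    have htl : t < l.length := by omega
    have hre : (n - t) % 2 = 0 := by omega
    have hr1 : 1 ≤ n - t := by omega
    refine ⟨(if a % 2 = par then a else a + (n - t) - 1), ?_, ?_, rfl⟩
    · rw [hcons t htl hto ht, pstrat_eq j i par (l.take t) a (n - t) hr1 hI]
    · by_cases hc : a % 2 = par <;> simp [hc] <;> omega
  constructor
  · -- shift property
    intro t ht ht' htl hto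
    have htn : t < n := by omega
    have ht1 : h.length ≤ t - 1 := by omega
    have ht1o : (t - 1) % 2 = 0 := by omega
    have ht1l : h.length < t - 1 := by omega
    obtain ⟨a₁, hI₁⟩ := hitv (t - 1) ht1 (by omega)
    obtain ⟨a, hI⟩ := hitv t (by omega) (by omega)
    have hIt : ItvAt n j i (l.take ((t - 1) + 1)) a (n - ((t - 1) + 1)) := by
      rw [(by omega : (t - 1) + 1 = t)]; exact hI
    obtain ⟨k, hk2j, hlk1, hcases⟩ := hstep (t - 1) ht1 (by omega) a₁ a hI₁ hIt
    -- parity of a₁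
    have ha₁ : a₁ % 2 ≠ par := by
      -- a₁ comes after Bob's move at t - 2
      obtain ⟨a₂, hI₂⟩ := hitv (t - 2) (by omega) (by omega)
      have hIt2 : ItvAt n j i (l.take ((t - 2) + 1)) a₁ (n - ((t - 2) + 1)) := by
        rw [(by omega : (t - 2) + 1 = t - 1)]; exact hI₁
      obtain ⟨k₂, hk₂2j, hlk₂, hcases₂⟩ := hstep (t - 2) (by omega) (by omega) a₂ a₁ hI₂ hIt2
      obtain ⟨e₂, hle₂, hpe₂, hee₂⟩ := hbob (t - 2) (by omega) (by omega) (by omega) a₂ hI₂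
      have hke : k₂ = e₂ := by
        have h1 : e₂ < n := by
          rcases hI₂ with ⟨hb₂, _⟩
          by_cases hc : a₂ % 2 = par <;> simp [hee₂, hc] <;> omega
        exact off_inj i (by omega) h1 (hlk₂.symm.trans hle₂)
      have hre : (n - (t - 2)) % 2 = 0 := by omega
      rcases hI₂ with ⟨hb₂, _⟩
      by_cases hc : a₂ % 2 = par <;> simp [hc] at hee₂ <;> omega
    rcases hcases with ⟨hka, haa⟩ | ⟨hka, haa⟩
    · -- Alice took the low end; Bob takes k + 1
      obtain ⟨e, hle, hpe, hee⟩ := hbob t (by omega) htn hto a hI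
      have hape : a % 2 = par := by omega
      rw [if_pos hape] at hee
      have hek : e = k + 1 := by omega
      rw [hle, hlk1, hek, off_succ]
      exact adj_succ' (by omega) _
    · -- Alice took the high end; Bob takes k - 1
      obtain ⟨e, hle, hpe, hee⟩ := hbob t (by omega) htn hto a hI
      have hre1 : (n - (t - 1)) % 2 = 1 := by omega
      have hape : a % 2 ≠ par := by omega
      rw [if_neg hape] at hee
      have hek : e = k - 1 := by omega
      have hk1 : 1 ≤ k := by omega
      have : l.get ⟨t - 1, ht'⟩ = (l.get ⟨t, ht⟩) + 1 := by
        rw [hle, hlk1, hek, ← off_succ, (by omega : k - 1 + 1 = k)]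
      rw [this]
      exact adj_succ (by omega) _
  · -- parity property
    intro k hk2j t ht hlk
    have htn : t < n := by omega
    rcases Nat.lt_or_ge t h.length with hth | hth
    · -- impossible: the slice would be in h
      exfalso
      have : l.get ⟨t, ht⟩ ∈ h := by
        rw [hheq]
        have : (l.take h.length).get ⟨t, by rw [List.length_take]; omega⟩ = l.get ⟨t, ht⟩ := by
          simp [List.getElem_take]
        rw [← this]
        exact List.get_mem _ _
      rw [hlk] at this
      exact ((hrem _).mpr ⟨k, hk2j, rfl⟩) this
    · rcases Nat.even_or_odd t with hte | hto
      · -- Alice's turn: endpoint of interval, parity ≠ par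
        have hte' : t % 2 = 0 := Nat.even_iff.mp hte
        have htgt : h.length < t := by omega
        obtain ⟨a, hI⟩ := hitv t hth (by omega)
        -- k is an endpoint of the interval at time t
        have hend : k = a ∨ k = a + (n - t) - 1 := by
          rcases Nat.lt_or_ge (t + 1) n with ht1 | ht1
          · obtain ⟨a', hI'⟩ := hitv (t + 1) (by omega) (by omega)
            obtain ⟨k', hk'2j, hlk', hcases⟩ := hstep t hth ht1 a a' hI hI'
            have hkk : k = k' := off_inj i (by omega) (by omega) (hlk.symm.trans hlk')
            rcases hcases with ⟨h1, _⟩ | ⟨h1, _⟩ <;> omega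
          · -- t = n - 1 : singleton interval
            have hnm : l.get ⟨t, ht⟩ ∉ l.take t := get_not_mem_take hvl.1 t ht
            have hkin := (hI.2 k hk2j).mp (hlk ▸ hnm)
            left; omega
        -- parity of a: via Bob's move at t - 1
        have ha : a % 2 ≠ par := by
          obtain ⟨a₂, hI₂⟩ := hitv (t - 1) (by omega) (by omega)
          have hIt2 : ItvAt n j i (l.take ((t - 1) + 1)) a (n - ((t - 1) + 1)) := by
            rw [(by omega : (t - 1) + 1 = t)]; exact hI
          obtain ⟨k₂, hk₂2j, hlk₂, hcases₂⟩ := hstep (t - 1) (by omega) (by omega) a₂ a hI₂ hIt2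
          obtain ⟨e₂, hle₂, hpe₂, hee₂⟩ := hbob (t - 1) (by omega) (by omega) (by omega) a₂ hI₂
          have hke : k₂ = e₂ := by
            have h1 : e₂ < n := by
              rcases hI₂ with ⟨hb₂, _⟩
              by_cases hc : a₂ % 2 = par <;> simp [hee₂, hc] <;> omega
            exact off_inj i (by omega) h1 (hlk₂.symm.trans hle₂)
          have hre : (n - (t - 1)) % 2 = 0 := by omega
          rcases hI₂ with ⟨hb₂, _⟩
          by_cases hc : a₂ % 2 = par <;> simp [hc] at hee₂ <;> omega
        have hro : (n - t) % 2 = 1 := by omega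
        constructor
        · intro hc; omega
        · intro hc; rcases hend with h1 | h1 <;> omega
      · -- Bob's turn
        have hto' : t % 2 = 1 := Nat.odd_iff.mp hto
        obtain ⟨a, hI⟩ := hitv t hth (by omega)
        obtain ⟨e, hle, hpe, hee⟩ := hbob t hth htn hto' a hI
        have hke : k = e := by
          have h1 : e < n := by
            rcases hI with ⟨hb, _⟩
            by_cases hc : a % 2 = par <;> simp [hee, hc] <;> omega
          exact off_inj i (by omega) h1 (hlk.symm.trans hle)
        constructor
        · intro _; omega
        · intro _; exact hto'


end Play

/-- after Alice\'s turn the remaining slices form an arc of even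
length `2j` starting at `i`; in the characteristic cycle they form two arcs
`R1` (odd offsets) and `R2` (even offsets).  If Bob takes the last slice of `R1`
(the slice at offset `2j-1`) and thereafter makes only shifts, then regardless
of Alice\'s play Bob takes exactly the slices of `R1` and Alice those of `R2`;
symmetrically with the first slice of `R2` (offset `0`). -/
theorem bob_shifts_takes_one_remaining_arc (n : ℕ) [NeZero n]
    (P : Fin n → ℝ) (hP : ∀ i, 0 ≤ P i)
    (h : List (Fin n)) (hh : ValidHist n h) (hodd : h.length % 2 = 1)
    (j : ℕ) (hj : 1 ≤ j) (hlen : h.length + 2 * j = n)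
    (i : Fin n)
    (hrem : ∀ m : Fin n, m ∉ h ↔ ∃ k < 2 * j, m = i + ((k : ℕ) : Fin n)) :
    (∃ s : List (Fin n) → Fin n,
      (∀ h', ValidHist n h' → h'.length < n → h'.length % 2 = 1 → h <+: h' →
        ValidMove n h' (s h')) ∧
      s h = i + (((2 * j - 1 : ℕ)) : Fin n) ∧
      ∀ l : List (Fin n), ValidHist n l → l.length = n → h <+: l →
        (∀ (k : ℕ) (hk : k < l.length), k % 2 = 1 → h.length ≤ k →
          l.get ⟨k, hk⟩ = s (l.take k)) →
        (∀ (t : ℕ) (ht : t < l.length) (ht' : t - 1 < l.length),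
          h.length < t → t % 2 = 1 → adj n (l.get ⟨t, ht⟩) (l.get ⟨t - 1, ht'⟩)) ∧
        (∀ k < 2 * j, ∀ (t : ℕ) (ht : t < l.length),
          l.get ⟨t, ht⟩ = i + ((k : ℕ) : Fin n) → (t % 2 = 1 ↔ k % 2 = 1))) ∧
    (∃ s : List (Fin n) → Fin n,
      (∀ h', ValidHist n h' → h'.length < n → h'.length % 2 = 1 → h <+: h' →
        ValidMove n h' (s h')) ∧
      s h = i ∧
      ∀ l : List (Fin n), ValidHist n l → l.length = n → h <+: l →
        (∀ (k : ℕ) (hk : k < l.length), k % 2 = 1 → h.length ≤ k →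
          l.get ⟨k, hk⟩ = s (l.take k)) →
        (∀ (t : ℕ) (ht : t < l.length) (ht' : t - 1 < l.length),
          h.length < t → t % 2 = 1 → adj n (l.get ⟨t, ht⟩) (l.get ⟨t - 1, ht'⟩)) ∧
        (∀ k < 2 * j, ∀ (t : ℕ) (ht : t < l.length),
          l.get ⟨t, ht⟩ = i + ((k : ℕ) : Fin n) → (t % 2 = 1 ↔ k % 2 = 0))) := by

  have hIh : ItvAt n j i h 0 (2 * j) :=
    ⟨by omega, fun k hk => ⟨fun _ => ⟨Nat.zero_le _, by omega⟩,
      fun _ => (hrem _).mpr ⟨k, hk, rfl⟩⟩⟩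
  constructor
  · refine ⟨pstrat n j i 1, pstrat_legal h j i 1 hodd hj hlen hrem, ?_, ?_⟩
    · rw [pstrat_eq j i 1 h 0 (2 * j) (by omega) hIh]
      norm_num
    · intro l hvl hll hpl hcons
      exact play_main h j i 1 (by omega) hodd hj hlen hrem l hvl hll hpl hcons
  · refine ⟨pstrat n j i 0, pstrat_legal h j i 0 hodd hj hlen hrem, ?_, ?_⟩
    · rw [pstrat_eq j i 0 h 0 (2 * j) (by omega) hIh]
      norm_num
    · intro l hvl hll hpl hcons
      exact play_main h j i 0 (by omega) hodd hj hlen hrem l hvl hll hpl hcons
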